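/- Combining regret matching with the performance-difference lemma: in a finite discounted MDP, if for each state s we set π̂(s) = RM(π(s), Q^π(s)) (the regret-matching policy with respect to Q^π(s), taken equal to π(s) when the positive-part regret vector vanishes), then for every state s and every direction field dπ(s)/dt = ω(s)(π̂(s) - π(s)) with ω(s) ∈ [η, 1], one has ⟨∇_π V^π(s₀), dπ/dt⟩ ≥ 0 for every initial state s₀. -/
import Mathlib


open Finset

/-- `chainProb Pmat s₀ k s` is the probability that the Markov chain with transition
matrix `Pmat`, started at `s₀`, is in state `s` at time `k`. -/
def chainProb {S : Type*} [Fintype S] [DecidableEq S]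
    (Pmat : S → S → ℝ) (s₀ : S) : ℕ → S → ℝ
  | 0 => fun s => if s = s₀ then 1 else 0
  | k + 1 => fun s => ∑ s', chainProb Pmat s₀ k s' * Pmat s' s

lemma chainProb_nonneg {S : Type*} [Fintype S] [DecidableEq S]
    (Pmat : S → S → ℝ) (hP : ∀ s s', 0 ≤ Pmat s s') (s₀ : S) :
    ∀ k s, 0 ≤ chainProb Pmat s₀ k s := by
  intro k
  induction k with
  | zero => intro s; simp only [chainProb]; split <;> norm_num
  | succ n ih =>
    intro s
    simp only [chainProb]
    exact Finset.sum_nonneg fun s' _ => mul_nonneg (ih s') (hP s' s)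

/-- Regret matching combined with the performance-difference lemma: the regret-matching
direction field `dπ(s)/dt = ω(s)(π̂(s) - π(s))` is an ascent direction for `V^π(s₀)`
(whose gradient is `∂V^π(s₀)/∂π(s,a) = (1/(1-γ)) d^π_{s₀}(s) Q^π(s,a)`), for every
initial state `s₀`. -/
theorem stmt_14 {S A : Type*} [Fintype S] [Fintype A] [DecidableEq S]
    [Nonempty S] [Nonempty A]
    (P : S → A → S → ℝ) (r : S → A → ℝ) (γ : ℝ)
    (hγ0 : 0 < γ) (hγ1 : γ < 1)
    (hPnn : ∀ s a s', 0 ≤ P s a s') (hPsum : ∀ s a, ∑ s', P s a s' = 1)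
    (π : S → A → ℝ)
    (hπnn : ∀ s a, 0 ≤ π s a) (hπsum : ∀ s, ∑ a, π s a = 1)
    (Qπ : S → A → ℝ)
    (hQπ : ∀ s a, Qπ s a = r s a + γ * ∑ s', P s a s' * ∑ a', π s' a' * Qπ s' a')
    (η : ℝ) (hη0 : 0 < η) (hη1 : η < 1)
    (ω : S → ℝ) (hω : ∀ s, ω s ∈ Set.Icc η 1)
    (πhat : S → A → ℝ)
    -- `π̂(s)` is the regret-matching policy with respect to `Q^π(s)` …
    (hπhat : ∀ s, (∃ a, 0 < max (Qπ s a - ∑ b, π s b * Qπ s b) 0) →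
      ∀ a, πhat s a =
        max (Qπ s a - ∑ b, π s b * Qπ s b) 0 /
          ∑ b, max (Qπ s b - ∑ c, π s c * Qπ s c) 0)
    -- … taken equal to `π(s)` when the positive-part regret vector vanishes
    (hπhat0 : ∀ s, ¬ (∃ a, 0 < max (Qπ s a - ∑ b, π s b * Qπ s b) 0) →
      ∀ a, πhat s a = π s a) :
    ∀ s₀ : S,
      0 ≤ ∑ s, ∑ a,
        ((1 / (1 - γ)) *
            ((1 - γ) * ∑' k : ℕ,
              γ ^ k * chainProb (fun t t' => ∑ b, π t b * P t b t') s₀ k s) *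
            Qπ s a) *
          (ω s * (πhat s a - π s a)) := by
  intro s₀
  have hγ' : (0:ℝ) < 1 - γ := by linarith
  have hPmat : ∀ t t' : S, 0 ≤ ∑ b, π t b * P t b t' := fun t t' =>
    Finset.sum_nonneg fun b _ => mul_nonneg (hπnn t b) (hPnn t b t')
  -- key per-state inequality
  have key : ∀ s, 0 ≤ ∑ a, Qπ s a * (πhat s a - π s a) := by
    intro s
    by_cases h : ∃ a, 0 < max (Qπ s a - ∑ b, π s b * Qπ s b) 0
    · set V := ∑ b, π s b * Qπ s b with hV
      set Z := ∑ b, max (Qπ s b - V) 0 with hZ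
      have hZpos : 0 < Z := by
        obtain ⟨a, ha⟩ := h
        refine lt_of_lt_of_le ha
          (Finset.single_le_sum (f := fun b => max (Qπ s b - V) 0)
            (fun b _ => le_max_right _ _) (Finset.mem_univ a))
      have hrw : ∀ a, πhat s a = max (Qπ s a - V) 0 / Z := hπhat s h
      have hQa : ∀ a, Qπ s a * max (Qπ s a - V) 0
          = (max (Qπ s a - V) 0)^2 + V * max (Qπ s a - V) 0 := by
        intro a
        rcases le_or_gt (Qπ s a - V) 0 with h' | h'
        · rw [max_eq_right h']; ring
        · rw [max_eq_left h'.le]; ring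
      have h1 : ∑ a, Qπ s a * π s a = V := by
        rw [hV]; exact Finset.sum_congr rfl fun a _ => mul_comm _ _
      have expand : ∑ a, Qπ s a * (πhat s a - π s a)
          = (∑ a, (max (Qπ s a - V) 0)^2) / Z := by
        have e1 : ∑ a, Qπ s a * (πhat s a - π s a)
            = (∑ a, Qπ s a * πhat s a) - ∑ a, Qπ s a * π s a := by
          rw [← Finset.sum_sub_distrib]
          exact Finset.sum_congr rfl fun a _ => by ring
        have e2 : ∑ a, Qπ s a * πhat s a
            = ((∑ a, (max (Qπ s a - V) 0)^2) + V * Z) / Z := by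
          have : ∑ a, Qπ s a * πhat s a
              = (∑ a, Qπ s a * max (Qπ s a - V) 0) / Z := by
            rw [Finset.sum_div]
            exact Finset.sum_congr rfl fun a _ => by rw [hrw a]; ring
          rw [this]
          congr 1
          calc ∑ a, Qπ s a * max (Qπ s a - V) 0
              = ∑ a, ((max (Qπ s a - V) 0)^2 + V * max (Qπ s a - V) 0) :=
                Finset.sum_congr rfl fun a _ => hQa a
            _ = (∑ a, (max (Qπ s a - V) 0)^2) + V * Z := by
                rw [Finset.sum_add_distrib, ← Finset.mul_sum, hZ]
        rw [e1, e2, h1]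
        field_simp
        ring
      rw [expand]
      exact div_nonneg (Finset.sum_nonneg fun a _ => sq_nonneg _) hZpos.le
    · have := hπhat0 s h
      simp [this]
  apply Finset.sum_nonneg
  intro s _
  set C : ℝ := (1 / (1 - γ)) *
      ((1 - γ) * ∑' k : ℕ,
        γ ^ k * chainProb (fun t t' => ∑ b, π t b * P t b t') s₀ k s) with hC
  have hCnn : 0 ≤ C := by
    apply mul_nonneg (by positivity)
    apply mul_nonneg hγ'.le
    apply tsum_nonneg
    intro k
    exact mul_nonneg (pow_nonneg hγ0.le k) (chainProb_nonneg _ hPmat s₀ k s)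
  have hωnn : 0 ≤ ω s := le_trans hη0.le (hω s).1
  have factored : ∑ a, (C * Qπ s a) * (ω s * (πhat s a - π s a))
      = (C * ω s) * ∑ a, Qπ s a * (πhat s a - π s a) := by
    rw [Finset.mul_sum]
    exact Finset.sum_congr rfl fun a _ => by ring
  rw [factored]
  exact mul_nonneg (mul_nonneg hCnn hωnn) (key s)
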